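/- The axiom system E_0 ∪ {EL}, consisting of the axioms A0: x + 0 ≈ x, A1: x + y ≈ y + x, A2: (x + y) + z ≈ x + (y + z), A3: x + x ≈ x, together with all instances of the expansion-law schema EL, is sound and ground-complete modulo bisimilarity ∼_B over CCS (Hennessy–Milner theorem). -/

import Mathlib

/-- Actions: names, co-names and the silent action τ. -/
inductive Act (A : Type) : Type
  | name : A → Act A
  | coname : A → Act A
  | tau : Act A
  deriving DecidableEq

/-- Complementation of actions (`co` of τ is τ; it is only ever used on non-τ actions). -/
def Act.co {A : Type} : Act A → Act A
  | .name a => .coname a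
  | .coname a => .name a
  | .tau => .tau

/-- CCS terms: 0, variables, prefixing, choice and parallel composition. -/
inductive Tm (A : Type) : Type
  | nil : Tm A
  | var : ℕ → Tm A
  | pre : Act A → Tm A → Tm A
  | plus : Tm A → Tm A → Tm A
  | par : Tm A → Tm A → Tm A

/-- The SOS transition relation of CCS. -/
inductive Step {A : Type} : Tm A → Act A → Tm A → Prop
  | pre (μ : Act A) (t : Tm A) : Step (.pre μ t) μ t
  | plusL {t u t' : Tm A} {μ : Act A} : Step t μ t' → Step (.plus t u) μ t'
  | plusR {t u u' : Tm A} {μ : Act A} : Step u μ u' → Step (.plus t u) μ u'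
  | parL {t u t' : Tm A} {μ : Act A} : Step t μ t' → Step (.par t u) μ (.par t' u)
  | parR {t u u' : Tm A} {μ : Act A} : Step u μ u' → Step (.par t u) μ (.par t u')
  | comm {t u t' u' : Tm A} {α : Act A} : α ≠ Act.tau → Step t α t' → Step u α.co u' →
      Step (.par t u) .tau (.par t' u')

/-- A term is closed (a process) if no variable occurs in it. -/
def Closed {A : Type} : Tm A → Prop
  | .nil => True
  | .var _ => False
  | .pre _ t => Closed t
  | .plus t u => Closed t ∧ Closed u
  | .par t u => Closed t ∧ Closed u

/-- Applying a substitution to a term. -/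
def subst {A : Type} (σ : ℕ → Tm A) : Tm A → Tm A
  | .nil => .nil
  | .var x => σ x
  | .pre μ t => .pre μ (subst σ t)
  | .plus t u => .plus (subst σ t) (subst σ u)
  | .par t u => .par (subst σ t) (subst σ u)

/-- A substitution is closed if all its values are closed. -/
def ClosedSubst {A : Type} (σ : ℕ → Tm A) : Prop := ∀ x, Closed (σ x)

/-- `R` is a bisimulation (symmetric, with the transfer property). -/
def IsBisim {A : Type} (R : Tm A → Tm A → Prop) : Prop :=
  (∀ p q, R p q → R q p) ∧
  (∀ p q μ p', R p q → Step p μ p' → ∃ q', Step q μ q' ∧ R p' q')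

/-- Bisimilarity: the largest bisimulation. -/
def Bisim {A : Type} (p q : Tm A) : Prop := ∃ R, IsBisim R ∧ R p q

/-- Equations are pairs of terms. -/
abbrev Eqn (A : Type) := Tm A × Tm A

/-- Derivability in equational logic from the axiom system `E`. -/
inductive Deriv {A : Type} (E : Set (Eqn A)) : Tm A → Tm A → Prop
  | ax {t u : Tm A} (σ : ℕ → Tm A) (h : (t, u) ∈ E) : Deriv E (subst σ t) (subst σ u)
  | refl (t : Tm A) : Deriv E t t
  | symm {t u : Tm A} (h : Deriv E t u) : Deriv E u t
  | trans {t u v : Tm A} (h₁ : Deriv E t u) (h₂ : Deriv E u v) : Deriv E t v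
  | pre (μ : Act A) {t u : Tm A} (h : Deriv E t u) : Deriv E (.pre μ t) (.pre μ u)
  | plus {t u t' u' : Tm A} (h₁ : Deriv E t u) (h₂ : Deriv E t' u') :
      Deriv E (.plus t t') (.plus u u')
  | par {t u t' u' : Tm A} (h₁ : Deriv E t u) (h₂ : Deriv E t' u') :
      Deriv E (.par t t') (.par u u')

/-- An equation is sound modulo `sim` if all its closed instances are related by `sim`. -/
def EqnSound {A : Type} (sim : Tm A → Tm A → Prop) (t u : Tm A) : Prop :=
  ∀ σ : ℕ → Tm A, ClosedSubst σ → sim (subst σ t) (subst σ u)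

/-- An axiom system is sound modulo `sim` if each of its equations is. -/
def SystemSound {A : Type} (sim : Tm A → Tm A → Prop) (E : Set (Eqn A)) : Prop :=
  ∀ e ∈ E, EqnSound sim e.1 e.2

/-- An axiom system is ground-complete modulo `sim` if it derives every valid
closed equation. -/
def GroundComplete {A : Type} (sim : Tm A → Tm A → Prop) (E : Set (Eqn A)) : Prop :=
  ∀ p q : Tm A, Closed p → Closed q → sim p q → Deriv E p q

/-- `sumF g n` is the sum `g 1 + ⋯ + g n` (empty sum being 0, no padding for `n = 1`). -/
def sumF {A : Type} (g : ℕ → Tm A) : ℕ → Tm A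
  | 0 => .nil
  | 1 => g 1
  | n + 2 => .plus (sumF g (n + 1)) (g (n + 2))

/-- The basic axioms A0–A3 for choice. -/
def E0 (A : Type) : Set (Eqn A) :=
  { (.plus (.var 0) .nil, .var 0),
    (.plus (.var 0) (.var 1), .plus (.var 1) (.var 0)),
    (.plus (.plus (.var 0) (.var 1)) (.var 2), .plus (.var 0) (.plus (.var 1) (.var 2))),
    (.plus (.var 0) (.var 0), .var 0) }

/-- Sum of a list of terms (the empty sum being 0). -/
def listSum {A : Type} : List (Tm A) → Tm A
  | [] => .nil
  | [t] => t
  | t :: u :: ts => .plus t (listSum (u :: ts))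

/-- `prefixed I` is the term `Σ_{(μ,x) ∈ I} μ.x`. -/
def prefixed {A : Type} (I : List (Act A × ℕ)) : Tm A :=
  listSum (I.map fun p => Tm.pre p.1 (.var p.2))

/-- Left-hand side of the expansion law for index lists `I`, `J`. -/
def elLhs {A : Type} (I J : List (Act A × ℕ)) : Tm A :=
  .par (prefixed I) (prefixed J)

/-- Right-hand side of the expansion law for index lists `I`, `J`. -/
def elRhs {A : Type} [DecidableEq A] (I J : List (Act A × ℕ)) : Tm A :=
  listSum
    ((I.map fun p => Tm.pre p.1 (.par (.var p.2) (prefixed J))) ++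
     (J.map fun q => Tm.pre q.1 (.par (prefixed I) (.var q.2))) ++
     (I.flatMap fun p =>
        (J.filter fun q => decide (p.1 ≠ Act.tau ∧ p.1 = q.1.co)).map fun q =>
          Tm.pre .tau (.par (.var p.2) (.var q.2))))

/-- The expansion-law schema EL: all its instances with finite index lists and
pairwise distinct variables. -/
def EL (A : Type) [DecidableEq A] : Set (Eqn A) :=
  { e | ∃ I J : List (Act A × ℕ),
      (I.map Prod.snd ++ J.map Prod.snd).Nodup ∧
      e = (elLhs I J, elRhs I J) }
namespace HM

variable {A : Type}

theorem Act.co_co (a : Act A) : a.co.co = a := by cases a <;> rfl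

theorem no_step_nil {μ : Act A} {t : Tm A} : ¬ Step (Tm.nil) μ t := by
  intro h; cases h

theorem no_step_var {x : ℕ} {μ : Act A} {t : Tm A} : ¬ Step (Tm.var x) μ t := by
  intro h; cases h

theorem step_pre_iff {ν : Act A} {s : Tm A} {μ : Act A} {t : Tm A} :
    Step (Tm.pre ν s) μ t ↔ (μ = ν ∧ t = s) := by
  constructor
  · intro h; cases h; exact ⟨rfl, rfl⟩
  · rintro ⟨rfl, rfl⟩; exact Step.pre _ _

theorem step_plus_iff {a b : Tm A} {μ : Act A} {t : Tm A} :
    Step (Tm.plus a b) μ t ↔ Step a μ t ∨ Step b μ t := by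
  constructor
  · intro h; cases h with
    | plusL h => exact Or.inl h
    | plusR h => exact Or.inr h
  · rintro (h | h); exacts [Step.plusL h, Step.plusR h]

theorem step_par_iff {a b : Tm A} {μ : Act A} {t : Tm A} :
    Step (Tm.par a b) μ t ↔
      (∃ a', Step a μ a' ∧ t = Tm.par a' b) ∨
      (∃ b', Step b μ b' ∧ t = Tm.par a b') ∨
      (∃ α a' b', α ≠ Act.tau ∧ μ = Act.tau ∧ Step a α a' ∧ Step b α.co b' ∧
        t = Tm.par a' b') := by
  constructor
  · intro h; cases h with
    | parL h => exact Or.inl ⟨_, h, rfl⟩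
    | parR h => exact Or.inr (Or.inl ⟨_, h, rfl⟩)
    | comm hα h1 h2 => exact Or.inr (Or.inr ⟨_, _, _, hα, rfl, h1, h2, rfl⟩)
  · rintro (⟨a', h, rfl⟩ | ⟨b', h, rfl⟩ | ⟨α, a', b', hα, rfl, h1, h2, rfl⟩)
    exacts [Step.parL h, Step.parR h, Step.comm hα h1 h2]

/-- Sum of prefixes over a list of (action, term) pairs. -/
def sumPre (L : List (Act A × Tm A)) : Tm A :=
  listSum (L.map fun p => Tm.pre p.1 p.2)

theorem step_listSum_cons {t : Tm A} {ts : List (Tm A)} {μ : Act A} {r : Tm A} :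
    Step (listSum (t :: ts)) μ r ↔ Step t μ r ∨ Step (listSum ts) μ r := by
  cases ts with
  | nil => simp [listSum, no_step_nil]
  | cons u us => exact step_plus_iff

theorem step_sumPre {L : List (Act A × Tm A)} {μ : Act A} {t : Tm A} :
    Step (sumPre L) μ t ↔ (μ, t) ∈ L := by
  induction L with
  | nil => simp [sumPre, listSum, no_step_nil]
  | cons p ps ih =>
    simp only [sumPre, List.map_cons, step_listSum_cons, step_pre_iff, List.mem_cons]
    rw [show Step (listSum (ps.map fun p => Tm.pre p.1 p.2)) μ t ↔ (μ, t) ∈ ps from ih]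
    constructor
    · rintro (⟨rfl, rfl⟩ | h)
      · exact Or.inl rfl
      · exact Or.inr h
    · rintro (h | h)
      · left; subst h; exact ⟨rfl, rfl⟩
      · exact Or.inr h


theorem bisim_refl (p : Tm A) : Bisim p p :=
  ⟨Eq, ⟨fun _ _ h => h.symm, fun p q μ p' h hs => ⟨p', h ▸ hs, rfl⟩⟩, rfl⟩

theorem bisim_symm {p q : Tm A} (h : Bisim p q) : Bisim q p := by
  obtain ⟨R, hR, hpq⟩ := h
  exact ⟨R, hR, hR.1 _ _ hpq⟩

theorem bisim_step {p q : Tm A} (h : Bisim p q) {μ : Act A} {p' : Tm A}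
    (hs : Step p μ p') : ∃ q', Step q μ q' ∧ Bisim p' q' := by
  obtain ⟨R, hR, hpq⟩ := h
  obtain ⟨q', hq, hr⟩ := hR.2 _ _ _ _ hpq hs
  exact ⟨q', hq, R, hR, hr⟩

theorem isBisim_bisim : IsBisim (Bisim (A := A)) :=
  ⟨fun _ _ => bisim_symm, fun _ _ _ _ h hs => bisim_step h hs⟩

theorem bisim_trans {p q r : Tm A} (h1 : Bisim p q) (h2 : Bisim q r) : Bisim p r := by
  refine ⟨fun a c => ∃ b, Bisim a b ∧ Bisim b c, ⟨?_, ?_⟩, q, h1, h2⟩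
  · rintro a c ⟨b, h1, h2⟩; exact ⟨b, bisim_symm h2, bisim_symm h1⟩
  · rintro a c μ a' ⟨b, h1, h2⟩ hs
    obtain ⟨b', hb, h1'⟩ := bisim_step h1 hs
    obtain ⟨c', hc, h2'⟩ := bisim_step h2 hb
    exact ⟨c', hc, b', h1', h2'⟩

/-- If two terms have exactly the same transitions, they are bisimilar. -/
theorem bisim_of_step_iff {p q : Tm A}
    (h : ∀ μ t, Step p μ t ↔ Step q μ t) : Bisim p q := by
  refine ⟨fun a b => a = b ∨ (a = p ∧ b = q) ∨ (a = q ∧ b = p), ⟨?_, ?_⟩, Or.inr (Or.inl ⟨rfl, rfl⟩)⟩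
  · rintro a b (rfl | ⟨rfl, rfl⟩ | ⟨rfl, rfl⟩) <;> tauto
  · rintro a b μ a' (rfl | ⟨rfl, rfl⟩ | ⟨rfl, rfl⟩) hs
    · exact ⟨a', hs, Or.inl rfl⟩
    · exact ⟨a', (h μ a').1 hs, Or.inl rfl⟩
    · exact ⟨a', (h μ a').2 hs, Or.inl rfl⟩

theorem bisim_pre (μ : Act A) {p q : Tm A} (h : Bisim p q) :
    Bisim (Tm.pre μ p) (Tm.pre μ q) := by
  refine ⟨fun a b => Bisim a b ∨ (a = Tm.pre μ p ∧ b = Tm.pre μ q) ∨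
      (a = Tm.pre μ q ∧ b = Tm.pre μ p), ⟨?_, ?_⟩, Or.inr (Or.inl ⟨rfl, rfl⟩)⟩
  · rintro a b (h' | ⟨rfl, rfl⟩ | ⟨rfl, rfl⟩)
    · exact Or.inl (bisim_symm h')
    · tauto
    · tauto
  · rintro a b ν a' (h' | ⟨rfl, rfl⟩ | ⟨rfl, rfl⟩) hs
    · obtain ⟨b', hb, h''⟩ := bisim_step h' hs
      exact ⟨b', hb, Or.inl h''⟩
    · obtain ⟨rfl, rfl⟩ := step_pre_iff.1 hs
      exact ⟨q, Step.pre _ _, Or.inl h⟩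
    · obtain ⟨rfl, rfl⟩ := step_pre_iff.1 hs
      exact ⟨p, Step.pre _ _, Or.inl (bisim_symm h)⟩

theorem bisim_plus {p q p' q' : Tm A} (h1 : Bisim p q) (h2 : Bisim p' q') :
    Bisim (Tm.plus p p') (Tm.plus q q') := by
  refine ⟨fun a b => Bisim a b ∨ (a = Tm.plus p p' ∧ b = Tm.plus q q') ∨
      (a = Tm.plus q q' ∧ b = Tm.plus p p'), ⟨?_, ?_⟩, Or.inr (Or.inl ⟨rfl, rfl⟩)⟩
  · rintro a b (h' | ⟨rfl, rfl⟩ | ⟨rfl, rfl⟩)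
    · exact Or.inl (bisim_symm h')
    · tauto
    · tauto
  · rintro a b ν a' (h' | ⟨rfl, rfl⟩ | ⟨rfl, rfl⟩) hs
    · obtain ⟨b', hb, h''⟩ := bisim_step h' hs
      exact ⟨b', hb, Or.inl h''⟩
    · rcases step_plus_iff.1 hs with h | h
      · obtain ⟨b', hb, h''⟩ := bisim_step h1 h
        exact ⟨b', Step.plusL hb, Or.inl h''⟩
      · obtain ⟨b', hb, h''⟩ := bisim_step h2 h
        exact ⟨b', Step.plusR hb, Or.inl h''⟩
    · rcases step_plus_iff.1 hs with h | h
      · obtain ⟨b', hb, h''⟩ := bisim_step (bisim_symm h1) h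
        exact ⟨b', Step.plusL hb, Or.inl h''⟩
      · obtain ⟨b', hb, h''⟩ := bisim_step (bisim_symm h2) h
        exact ⟨b', Step.plusR hb, Or.inl h''⟩

theorem bisim_par {p q p' q' : Tm A} (h1 : Bisim p q) (h2 : Bisim p' q') :
    Bisim (Tm.par p p') (Tm.par q q') := by
  refine ⟨fun x y => ∃ a b c d, x = Tm.par a b ∧ y = Tm.par c d ∧ Bisim a c ∧ Bisim b d,
    ⟨?_, ?_⟩, p, p', q, q', rfl, rfl, h1, h2⟩
  · rintro x y ⟨a, b, c, d, rfl, rfl, ha, hb⟩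
    exact ⟨c, d, a, b, rfl, rfl, bisim_symm ha, bisim_symm hb⟩
  · rintro x y μ x' ⟨a, b, c, d, rfl, rfl, ha, hb⟩ hs
    rcases step_par_iff.1 hs with ⟨a', h, rfl⟩ | ⟨b', h, rfl⟩ |
      ⟨α, a', b', hα, rfl, hsa, hsb⟩
    · obtain ⟨c', hc, h'⟩ := bisim_step ha h
      exact ⟨Tm.par c' d, Step.parL hc, a', b, c', d, rfl, rfl, h', hb⟩
    · obtain ⟨d', hd, h'⟩ := bisim_step hb h
      exact ⟨Tm.par c d', Step.parR hd, a, b', c, d', rfl, rfl, ha, h'⟩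
    · obtain ⟨rfl⟩ := hsb.2
      obtain ⟨c', hc, h'⟩ := bisim_step ha hsa
      obtain ⟨d', hd, h''⟩ := bisim_step hb hsb.1
      exact ⟨Tm.par c' d', Step.comm hα hc hd, a', b', c', d', rfl, rfl, h', h''⟩


theorem closed_subst {σ : ℕ → Tm A} (hσ : ClosedSubst σ) (t : Tm A) :
    Closed (subst σ t) := by
  induction t with
  | nil => trivial
  | var x => exact hσ x
  | pre μ t ih => exact ih
  | plus t u iht ihu => exact ⟨iht, ihu⟩
  | par t u iht ihu => exact ⟨iht, ihu⟩

theorem subst_closed_id {t : Tm A} (h : Closed t) (σ : ℕ → Tm A) :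
    subst σ t = t := by
  induction t with
  | nil => rfl
  | var x => exact absurd h id
  | pre μ t ih => simp [subst, ih h]
  | plus t u iht ihu => simp [subst, iht h.1, ihu h.2]
  | par t u iht ihu => simp [subst, iht h.1, ihu h.2]

theorem subst_comp (σ σ' : ℕ → Tm A) (t : Tm A) :
    subst σ (subst σ' t) = subst (fun x => subst σ (σ' x)) t := by
  induction t with
  | nil => rfl
  | var x => rfl
  | pre μ t ih => simp [subst, ih]
  | plus t u iht ihu => simp [subst, iht, ihu]
  | par t u iht ihu => simp [subst, iht, ihu]

theorem subst_listSum (σ : ℕ → Tm A) (M : List (Tm A)) :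
    subst σ (listSum M) = listSum (M.map (subst σ)) := by
  induction M with
  | nil => rfl
  | cons t ts ih =>
    cases ts with
    | nil => rfl
    | cons u us => simp only [listSum, subst, List.map_cons] at *; rw [ih]

theorem subst_sumPre (σ : ℕ → Tm A) (L : List (Act A × Tm A)) :
    subst σ (sumPre L) = sumPre (L.map fun p => (p.1, subst σ p.2)) := by
  simp only [sumPre, subst_listSum, List.map_map]
  congr 1

theorem subst_prefixed (σ : ℕ → Tm A) (I : List (Act A × ℕ)) :
    subst σ (prefixed I) = sumPre (I.map fun p => (p.1, σ p.2)) := by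
  simp only [prefixed, sumPre, subst_listSum, List.map_map]
  congr 1


variable [DecidableEq A]

/-- The list of summands of the expansion of `par (sumPre L) (sumPre M)`. -/
def expand (L M : List (Act A × Tm A)) : List (Act A × Tm A) :=
  (L.map fun p => (p.1, Tm.par p.2 (sumPre M))) ++
  (M.map fun q => (q.1, Tm.par (sumPre L) q.2)) ++
  (L.flatMap fun p =>
    (M.filter fun q => decide (p.1 ≠ Act.tau ∧ p.1 = q.1.co)).map fun q =>
      (Act.tau, Tm.par p.2 q.2))

theorem mem_expand {L M : List (Act A × Tm A)} {μ : Act A} {t : Tm A} :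
    (μ, t) ∈ expand L M ↔
      (∃ p ∈ L, μ = p.1 ∧ t = Tm.par p.2 (sumPre M)) ∨
      (∃ q ∈ M, μ = q.1 ∧ t = Tm.par (sumPre L) q.2) ∨
      (∃ p ∈ L, ∃ q ∈ M, p.1 ≠ Act.tau ∧ p.1 = q.1.co ∧ μ = Act.tau ∧
        t = Tm.par p.2 q.2) := by
  simp only [expand, List.mem_append, List.mem_map, List.mem_flatMap, List.mem_filter,
    decide_eq_true_eq, Prod.mk.injEq]
  constructor
  · rintro ((⟨p, hp, h1, h2⟩ | ⟨q, hq, h1, h2⟩) | ⟨p, hp, q, ⟨hq, hc1, hc2⟩, h1, h2⟩)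
    · exact Or.inl ⟨p, hp, h1.symm, h2.symm⟩
    · exact Or.inr (Or.inl ⟨q, hq, h1.symm, h2.symm⟩)
    · exact Or.inr (Or.inr ⟨p, hp, q, hq, hc1, hc2, h1.symm, h2.symm⟩)
  · rintro (⟨p, hp, h1, h2⟩ | ⟨q, hq, h1, h2⟩ | ⟨p, hp, q, hq, hc1, hc2, h1, h2⟩)
    · exact Or.inl (Or.inl ⟨p, hp, h1.symm, h2.symm⟩)
    · exact Or.inl (Or.inr ⟨q, hq, h1.symm, h2.symm⟩)
    · exact Or.inr ⟨p, hp, q, ⟨hq, hc1, hc2⟩, h1.symm, h2.symm⟩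

/-- The key semantic fact behind the expansion law. -/
theorem step_expand_iff {L M : List (Act A × Tm A)} {μ : Act A} {t : Tm A} :
    Step (Tm.par (sumPre L) (sumPre M)) μ t ↔ Step (sumPre (expand L M)) μ t := by
  rw [step_par_iff, step_sumPre, mem_expand]
  constructor
  · rintro (⟨a', h, rfl⟩ | ⟨b', h, rfl⟩ | ⟨α, a', b', hα, rfl, h1, h2, rfl⟩)
    · exact Or.inl ⟨(μ, a'), step_sumPre.1 h, rfl, rfl⟩
    · exact Or.inr (Or.inl ⟨(μ, b'), step_sumPre.1 h, rfl, rfl⟩)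
    · refine Or.inr (Or.inr ⟨(α, a'), step_sumPre.1 h1, (α.co, b'), step_sumPre.1 h2,
        hα, (Act.co_co α).symm, rfl, rfl⟩)
  · rintro (⟨p, hp, rfl, rfl⟩ | ⟨q, hq, rfl, rfl⟩ |
      ⟨p, hp, q, hq, hc1, hc2, rfl, rfl⟩)
    · exact Or.inl ⟨p.2, step_sumPre.2 (by simpa using hp), rfl⟩
    · exact Or.inr (Or.inl ⟨q.2, step_sumPre.2 (by simpa using hq), rfl⟩)
    · refine Or.inr (Or.inr ⟨p.1, p.2, q.2, hc1, rfl,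
        step_sumPre.2 (by simpa using hp), step_sumPre.2 ?_, rfl⟩)
      have : p.1.co = q.1 := by rw [hc2, Act.co_co]
      rw [this]; simpa using hq


theorem subst_elLhs (σ : ℕ → Tm A) (I J : List (Act A × ℕ)) :
    subst σ (elLhs I J) =
      Tm.par (sumPre (I.map fun p => (p.1, σ p.2))) (sumPre (J.map fun p => (p.1, σ p.2))) := by
  simp [elLhs, subst, subst_prefixed]

theorem subst_elRhs (σ : ℕ → Tm A) (I J : List (Act A × ℕ)) :
    subst σ (elRhs I J) =
      sumPre (expand (I.map fun p => (p.1, σ p.2)) (J.map fun p => (p.1, σ p.2))) := by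
  have hI := subst_prefixed σ I
  have hJ := subst_prefixed σ J
  simp only [elRhs, subst_listSum, List.map_append, List.map_map, sumPre, expand,
    List.map_flatMap, List.flatMap_map, List.filter_map]
  congr 1
  refine congrArg₂ _ (congrArg₂ _ ?_ ?_) ?_
  · refine List.map_congr_left fun p _ => ?_
    simp [Function.comp, subst, hJ, sumPre]
  · refine List.map_congr_left fun q _ => ?_
    simp [Function.comp, subst, hI, sumPre]
  · refine List.flatMap_congr fun p _ => ?_
    have hfil : List.filter ((fun q => decide (p.1 ≠ Act.tau ∧ p.1 = q.1.co)) ∘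
          fun p : Act A × ℕ => (p.1, σ p.2)) J =
        List.filter (fun q => decide (p.1 ≠ Act.tau ∧ p.1 = q.1.co)) J :=
      List.filter_congr fun q _ => by simp [Function.comp]
    rw [hfil]
    exact List.map_congr_left fun q _ => rfl

theorem sound : SystemSound (Bisim (A := A)) (E0 A ∪ EL A) := by
  rintro ⟨t, u⟩ (h | h)
  · simp only [E0, Set.mem_insert_iff, Set.mem_singleton_iff, Prod.mk.injEq] at h
    rcases h with ⟨rfl, rfl⟩ | ⟨rfl, rfl⟩ | ⟨rfl, rfl⟩ | ⟨rfl, rfl⟩ <;>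
      intro σ hσ <;>
      apply bisim_of_step_iff <;>
      intro μ r <;>
      simp only [subst, step_plus_iff, iff_def] <;>
      constructor <;>
      intro hh <;>
      first
        | tauto
        | (rcases hh with hh | hh; · tauto; · exact absurd hh no_step_nil)
  · obtain ⟨I, J, _, heq⟩ := h
    cases heq
    intro σ hσ
    rw [subst_elLhs, subst_elRhs]
    exact bisim_of_step_iff fun μ r => step_expand_iff


/- ### Derivability helpers -/

section DerivHelpers

local notation "ES" => (E0 A ∪ EL A : Set (Eqn A))

theorem d_plus_nil (t : Tm A) : Deriv ES (Tm.plus t Tm.nil) t := by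
  have h := Deriv.ax (E := ES) (fun _ => t)
    (Set.mem_union_left _ (show _ ∈ E0 A by left; rfl))
  simpa [subst] using h

theorem d_comm (t u : Tm A) : Deriv ES (Tm.plus t u) (Tm.plus u t) := by
  have h := Deriv.ax (E := ES) (fun n => if n = 0 then t else u)
    (Set.mem_union_left _ (show _ ∈ E0 A by right; left; rfl))
  simpa [subst] using h

theorem d_assoc (t u v : Tm A) :
    Deriv ES (Tm.plus (Tm.plus t u) v) (Tm.plus t (Tm.plus u v)) := by
  have h := Deriv.ax (E := ES) (fun n => if n = 0 then t else if n = 1 then u else v)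
    (Set.mem_union_left _ (show _ ∈ E0 A by right; right; left; rfl))
  simpa [subst] using h

theorem d_idem (t : Tm A) : Deriv ES (Tm.plus t t) t := by
  have h := Deriv.ax (E := ES) (fun _ => t)
    (Set.mem_union_left _ (show _ ∈ E0 A by right; right; right; rfl))
  simpa [subst] using h

theorem d_nil_plus (t : Tm A) : Deriv ES (Tm.plus Tm.nil t) t :=
  (d_comm _ _).trans (d_plus_nil t)

theorem d_listSum_cons (t : Tm A) (ts : List (Tm A)) :
    Deriv ES (listSum (t :: ts)) (Tm.plus t (listSum ts)) := by
  cases ts with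
  | nil => exact (d_plus_nil t).symm
  | cons u us => exact Deriv.refl _

theorem d_listSum_append (M N : List (Tm A)) :
    Deriv ES (listSum (M ++ N)) (Tm.plus (listSum M) (listSum N)) := by
  induction M with
  | nil => exact (d_nil_plus _).symm
  | cons t M ih =>
    refine (d_listSum_cons t (M ++ N)).trans ?_
    refine ((Deriv.refl t).plus ih).trans ?_
    refine ((d_assoc t (listSum M) (listSum N)).symm).trans ?_
    exact ((d_listSum_cons t M).symm.plus (Deriv.refl _))

theorem d_absorb_mem {u : Tm A} {N : List (Tm A)} (h : u ∈ N) :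
    Deriv ES (Tm.plus u (listSum N)) (listSum N) := by
  induction N with
  | nil => cases h
  | cons v N ih =>
    have hv := d_listSum_cons v N
    rcases List.mem_cons.1 h with rfl | h
    · refine ((Deriv.refl u).plus hv).trans ?_
      refine ((d_assoc u u (listSum N)).symm).trans ?_
      exact ((d_idem u).plus (Deriv.refl _)).trans hv.symm
    · refine ((Deriv.refl u).plus hv).trans ?_
      refine ((d_assoc u v (listSum N)).symm).trans ?_
      refine (((d_comm u v).plus (Deriv.refl _))).trans ?_
      refine (d_assoc v u (listSum N)).trans ?_
      exact ((Deriv.refl v).plus (ih h)).trans hv.symm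

theorem d_absorb_list {M N : List (Tm A)}
    (h : ∀ t ∈ M, ∃ u ∈ N, Deriv ES t u) :
    Deriv ES (Tm.plus (listSum M) (listSum N)) (listSum N) := by
  induction M with
  | nil => exact d_nil_plus _
  | cons t M ih =>
    obtain ⟨u, hu, htu⟩ := h t (List.mem_cons_self)
    refine ((d_listSum_cons t M).plus (Deriv.refl _)).trans ?_
    refine (d_assoc t (listSum M) (listSum N)).trans ?_
    refine ((Deriv.refl t).plus (ih fun s hs => h s (List.mem_cons_of_mem _ hs))).trans ?_
    exact (htu.plus (Deriv.refl _)).trans (d_absorb_mem hu)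

end DerivHelpers


/- ### Depth and normal forms -/

def depth : Tm A → ℕ
  | .nil => 0
  | .var _ => 0
  | .pre _ t => depth t + 1
  | .plus t u => max (depth t) (depth u)
  | .par t u => depth t + depth u

theorem closed_listSum {M : List (Tm A)} (h : ∀ t ∈ M, Closed t) :
    Closed (listSum M) := by
  induction M with
  | nil => trivial
  | cons t ts ih =>
    cases ts with
    | nil => exact h t (List.mem_cons_self)
    | cons u us =>
      exact ⟨h t (List.mem_cons_self), ih fun s hs => h s (List.mem_cons_of_mem _ hs)⟩

theorem closed_sumPre {L : List (Act A × Tm A)} (h : ∀ e ∈ L, Closed e.2) :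
    Closed (sumPre L) := by
  refine closed_listSum fun t ht => ?_
  obtain ⟨e, he, rfl⟩ := List.mem_map.1 ht
  exact h e he

theorem depth_listSum {M : List (Tm A)} {n : ℕ} (h : ∀ t ∈ M, depth t ≤ n) :
    depth (listSum M) ≤ n := by
  induction M with
  | nil => exact Nat.zero_le n
  | cons t ts ih =>
    cases ts with
    | nil => exact h t (List.mem_cons_self)
    | cons u us =>
      exact max_le (h t (List.mem_cons_self)) (ih fun s hs => h s (List.mem_cons_of_mem _ hs))

theorem depth_sumPre {L : List (Act A × Tm A)} {n : ℕ} (h : ∀ e ∈ L, depth e.2 + 1 ≤ n) :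
    depth (sumPre L) ≤ n := by
  refine depth_listSum fun t ht => ?_
  obtain ⟨e, he, rfl⟩ := List.mem_map.1 ht
  exact h e he

/-- A provable instance of the expansion law over explicit head normal forms. -/
theorem d_expand (Lt Lu : List (Act A × Tm A)) :
    Deriv (E0 A ∪ EL A) (Tm.par (sumPre Lt) (sumPre Lu)) (sumPre (expand Lt Lu)) := by
  classical
  set d : Act A × Tm A := (Act.tau, Tm.nil) with hd
  set n := Lt.length with hn
  set σ : ℕ → Tm A := fun k => ((Lt ++ Lu).getD k d).2 with hσ
  set I : List (Act A × ℕ) := (List.range n).map fun i => ((Lt.getD i d).1, i) with hIdef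
  set J : List (Act A × ℕ) :=
    (List.range Lu.length).map fun j => ((Lu.getD j d).1, n + j) with hJdef
  have hI : I.map (fun p => (p.1, σ p.2)) = Lt := by
    refine List.ext_getElem (by simp [hIdef, hn]) ?_
    intro i h1 h2
    simp only [hIdef, List.getElem_map, List.getElem_range, hσ]
    rw [List.getD_append _ _ _ _ (by simpa [hIdef, hn] using h2),
      List.getD_eq_getElem _ _ (by simpa [hIdef, hn] using h2)]
  have hJ : J.map (fun p => (p.1, σ p.2)) = Lu := by
    refine List.ext_getElem (by simp [hJdef]) ?_
    intro j h1 h2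
    simp only [hJdef, List.getElem_map, List.getElem_range, hσ]
    rw [List.getD_append_right _ _ _ _ (by simp [hn]),
      show n + j - Lt.length = j by simp [hn],
      List.getD_eq_getElem _ _ (by simpa [hJdef] using h2)]
  have hnd : (I.map Prod.snd ++ J.map Prod.snd).Nodup := by
    have h1 : I.map Prod.snd = List.range n := by
      rw [hIdef, List.map_map]
      exact (List.map_congr_left fun i _ => rfl).trans (List.map_id _)
    have h2 : J.map Prod.snd = (List.range Lu.length).map (n + ·) := by
      rw [hJdef, List.map_map]
      exact List.map_congr_left fun j _ => rfl
    rw [h1, h2]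
    refine List.Nodup.append (List.nodup_range) ?_ ?_
    · exact (List.nodup_range).map fun a b => by omega
    · intro x hx hx'
      obtain ⟨j, hj, rfl⟩ := List.mem_map.1 hx'
      have := List.mem_range.1 hx
      omega
  have hmem : (elLhs I J, elRhs I J) ∈ (E0 A ∪ EL A) :=
    Set.mem_union_right _ ⟨I, J, hnd, rfl⟩
  have h := Deriv.ax (E := E0 A ∪ EL A) σ hmem
  rwa [subst_elLhs, subst_elRhs, hI, hJ] at h

/-- Head-normal-form lemma. -/
theorem hnf (p : Tm A) (hp : Closed p) :
    ∃ L : List (Act A × Tm A),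
      (∀ e ∈ L, Closed e.2 ∧ depth e.2 + 1 ≤ depth p) ∧
      Deriv (E0 A ∪ EL A) p (sumPre L) := by
  induction p with
  | nil => exact ⟨[], by simp, Deriv.refl _⟩
  | var x => exact absurd hp id
  | pre μ t _ =>
    refine ⟨[(μ, t)], ?_, Deriv.refl _⟩
    rintro e he
    simp only [List.mem_singleton] at he
    subst he
    exact ⟨hp, le_rfl⟩
  | plus t u iht ihu =>
    obtain ⟨Lt, hLt, dt⟩ := iht hp.1
    obtain ⟨Lu, hLu, du⟩ := ihu hp.2
    refine ⟨Lt ++ Lu, ?_, ?_⟩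
    · intro e he
      rcases List.mem_append.1 he with h | h
      · exact ⟨(hLt e h).1, le_trans (hLt e h).2 (le_max_left _ _)⟩
      · exact ⟨(hLu e h).1, le_trans (hLu e h).2 (le_max_right _ _)⟩
    · refine (dt.plus du).trans ?_
      have : Deriv (E0 A ∪ EL A) (sumPre (Lt ++ Lu))
          (Tm.plus (sumPre Lt) (sumPre Lu)) := by
        simpa [sumPre, List.map_append] using
          d_listSum_append (Lt.map fun e => Tm.pre e.1 e.2) (Lu.map fun e => Tm.pre e.1 e.2)
      exact this.symm
  | par t u iht ihu =>
    obtain ⟨Lt, hLt, dt⟩ := iht hp.1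
    obtain ⟨Lu, hLu, du⟩ := ihu hp.2
    have hct : Closed (sumPre Lt) := closed_sumPre fun e he => (hLt e he).1
    have hcu : Closed (sumPre Lu) := closed_sumPre fun e he => (hLu e he).1
    have hdt : depth (sumPre Lt) ≤ depth t := depth_sumPre fun e he => (hLt e he).2
    have hdu : depth (sumPre Lu) ≤ depth u := depth_sumPre fun e he => (hLu e he).2
    refine ⟨expand Lt Lu, ?_, (dt.par du).trans (d_expand Lt Lu)⟩
    intro e he
    have he' : (e.1, e.2) ∈ expand Lt Lu := by simpa using he
    rcases mem_expand.1 he' with ⟨a, ha, h1, h2⟩ | ⟨b, hb, h1, h2⟩ |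
      ⟨a, ha, b, hb, _, _, h1, h2⟩
    · have := hLt a ha
      refine h2 ▸ ⟨⟨this.1, hcu⟩, ?_⟩
      show depth a.2 + depth (sumPre Lu) + 1 ≤ depth t + depth u
      omega
    · have := hLu b hb
      refine h2 ▸ ⟨⟨hct, this.1⟩, ?_⟩
      show depth (sumPre Lt) + depth b.2 + 1 ≤ depth t + depth u
      omega
    · have h3 := hLt a ha
      have h4 := hLu b hb
      refine h2 ▸ ⟨⟨h3.1, h4.1⟩, ?_⟩
      show depth a.2 + depth b.2 + 1 ≤ depth t + depth u
      omega


/- ### Soundness of derivations and completeness -/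

theorem deriv_bisim {E : Set (Eqn A)} (hE : SystemSound Bisim E) {t u : Tm A}
    (h : Deriv E t u) (σ : ℕ → Tm A) (hσ : ClosedSubst σ) :
    Bisim (subst σ t) (subst σ u) := by
  induction h with
  | ax σ' hmem =>
    rw [subst_comp, subst_comp]
    exact hE _ hmem _ fun x => closed_subst hσ _
  | refl t => exact bisim_refl _
  | symm _ ih => exact bisim_symm ih
  | trans _ _ ih1 ih2 => exact bisim_trans ih1 ih2
  | pre μ _ ih => exact bisim_pre μ ih
  | plus _ _ ih1 ih2 => exact bisim_plus ih1 ih2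
  | par _ _ ih1 ih2 => exact bisim_par ih1 ih2

theorem deriv_sound {E : Set (Eqn A)} (hE : SystemSound Bisim E) {t u : Tm A}
    (h : Deriv E t u) (ht : Closed t) (hu : Closed u) : Bisim t u := by
  have := deriv_bisim hE h (fun _ => Tm.nil) (fun _ => trivial)
  rwa [subst_closed_id ht, subst_closed_id hu] at this

theorem complete : GroundComplete Bisim (E0 A ∪ EL A) := by
  suffices H : ∀ n (p q : Tm A), Closed p → Closed q → Bisim p q →
      depth p + depth q ≤ n → Deriv (E0 A ∪ EL A) p q by
    exact fun p q hp hq h => H _ p q hp hq h le_rfl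
  intro n
  induction n using Nat.strong_induction_on with
  | _ n IH =>
  intro p q hp hq hpq hdep
  obtain ⟨Lp, hLp, dp⟩ := hnf p hp
  obtain ⟨Lq, hLq, dq⟩ := hnf q hq
  have hcp : Closed (sumPre Lp) := closed_sumPre fun e he => (hLp e he).1
  have hcq : Closed (sumPre Lq) := closed_sumPre fun e he => (hLq e he).1
  have bp : Bisim (sumPre Lp) p := bisim_symm (deriv_sound sound dp hp hcp)
  have bq : Bisim q (sumPre Lq) := deriv_sound sound dq hq hcq
  have hb : Bisim (sumPre Lp) (sumPre Lq) := bisim_trans bp (bisim_trans hpq bq)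
  -- matching of summands
  have key : ∀ {L M : List (Act A × Tm A)}, Bisim (sumPre L) (sumPre M) →
      (∀ e ∈ L, Closed e.2 ∧ depth e.2 + 1 ≤ depth p) →
      (∀ e ∈ M, Closed e.2 ∧ depth e.2 + 1 ≤ depth q) →
      ∀ t' ∈ L.map fun e => Tm.pre e.1 e.2,
        ∃ u' ∈ M.map fun e => Tm.pre e.1 e.2, Deriv (E0 A ∪ EL A) t' u' := by
    intro L M hbLM hL hM t' ht'
    obtain ⟨e, he, rfl⟩ := List.mem_map.1 ht'
    have hstep : Step (sumPre L) e.1 e.2 := step_sumPre.2 (by simpa using he)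
    obtain ⟨q', hq', hbis⟩ := bisim_step hbLM hstep
    have hmem : (e.1, q') ∈ M := step_sumPre.1 hq'
    refine ⟨Tm.pre e.1 q', List.mem_map.2 ⟨(e.1, q'), hmem, rfl⟩, Deriv.pre _ ?_⟩
    have h1 := hL e he
    have h2 := hM (e.1, q') hmem
    have h2d : depth q' + 1 ≤ depth q := h2.2
    refine IH (depth e.2 + depth q') (by omega) e.2 q' h1.1 h2.1 hbis le_rfl
  have k1 := key hb hLp hLq
  have k2 : ∀ t' ∈ Lq.map fun e => Tm.pre e.1 e.2,
      ∃ u' ∈ Lp.map fun e => Tm.pre e.1 e.2, Deriv (E0 A ∪ EL A) t' u' := by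
    intro t' ht'
    obtain ⟨e, he, rfl⟩ := List.mem_map.1 ht'
    have hstep : Step (sumPre Lq) e.1 e.2 := step_sumPre.2 (by simpa using he)
    obtain ⟨q', hq', hbis⟩ := bisim_step (bisim_symm hb) hstep
    have hmem : (e.1, q') ∈ Lp := step_sumPre.1 hq'
    refine ⟨Tm.pre e.1 q', List.mem_map.2 ⟨(e.1, q'), hmem, rfl⟩, Deriv.pre _ ?_⟩
    have h1 := hLq e he
    have h2 := hLp (e.1, q') hmem
    have h2d : depth q' + 1 ≤ depth p := h2.2
    refine IH (depth e.2 + depth q') (by omega) e.2 q' h1.1 h2.1 hbis le_rfl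
  have ab1 : Deriv (E0 A ∪ EL A) (Tm.plus (sumPre Lp) (sumPre Lq)) (sumPre Lq) :=
    d_absorb_list k1
  have ab2 : Deriv (E0 A ∪ EL A) (Tm.plus (sumPre Lq) (sumPre Lp)) (sumPre Lp) :=
    d_absorb_list k2
  have main : Deriv (E0 A ∪ EL A) (sumPre Lp) (sumPre Lq) :=
    (ab2.symm.trans (d_comm _ _)).trans ab1
  exact (dp.trans main).trans dq.symm

end HM

/-- **Hennessy–Milner theorem**: the axiom system `E₀ ∪ {EL}` is sound and
ground-complete modulo bisimilarity over CCS. -/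
theorem stmt_2 (A : Type) [DecidableEq A] :
    SystemSound Bisim (E0 A ∪ EL A) ∧ GroundComplete Bisim (E0 A ∪ EL A) := by
  exact ⟨HM.sound, HM.complete⟩
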